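/- arXiv:1307.3283 — 2 statements merged into one kernel-verified Lean document; each statement's English description precedes it below -/
import Mathlib

section
/- Let (Ω, F, μ) be a probability space, and let X : Ω → ℝⁿ, X̂ : Ω → ℝⁿ, and S : Ω → ℝⁿ be square-integrable random vectors with E[(X − X̂) Sᵀ] = Iₙ and J := E[S Sᵀ] positive definite. Then the scalar mean square error satisfies E‖X − X̂‖² ≥ tr(J⁻¹), where ‖·‖ is the Euclidean norm and tr is the matrix trace. -/
open MeasureTheory

private lemma l2_mul_integrable {Ω : Type*} [MeasurableSpace Ω] {μ : Measure Ω}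
    {f g : Ω → ℝ} (hf : MemLp f 2 μ) (hg : MemLp g 2 μ) :
    Integrable (fun ω => f ω * g ω) μ := by
  haveI : ENNReal.HolderTriple 2 2 1 := ⟨by rw [ENNReal.inv_two_add_inv_two, inv_one]⟩
  have h : MemLp (f • g) 1 μ := hg.smul hf
  exact memLp_one_iff_integrable.mp h

/-- Scalar posterior Cramér–Rao lower bound (eq. (3)): under the score identity
`E[(X - X̂) Sᵀ] = Iₙ` and positive definiteness of `J = E[S Sᵀ]`, the scalar mean
square error satisfies `E‖X - X̂‖² ≥ tr(J⁻¹)`. -/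
theorem posterior_cramer_rao_scalar_bound {n : ℕ} {Ω : Type*} [MeasurableSpace Ω]
    (μ : Measure Ω) [IsProbabilityMeasure μ]
    (X Xhat S : Ω → EuclideanSpace ℝ (Fin n))
    (hX : MemLp X 2 μ) (hXhat : MemLp Xhat 2 μ) (hS : MemLp S 2 μ)
    (hscore : ∀ i j,
      (∫ ω, (X ω i - Xhat ω i) * S ω j ∂μ) = (1 : Matrix (Fin n) (Fin n) ℝ) i j)
    (J : Matrix (Fin n) (Fin n) ℝ)
    (hJ : ∀ i j, J i j = ∫ ω, S ω i * S ω j ∂μ)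
    (hJpd : J.PosDef) :
    (∫ ω, ‖X ω - Xhat ω‖ ^ 2 ∂μ) ≥ Matrix.trace J⁻¹ := by
  classical
  set A : Matrix (Fin n) (Fin n) ℝ := J⁻¹ with hA
  have hJunit : IsUnit J.det := isUnit_iff_ne_zero.2 hJpd.det_pos.ne'
  have hAJ : A * J = 1 := Matrix.nonsing_inv_mul J hJunit
  -- components are in L²
  have he : ∀ i, MemLp (fun ω => X ω i - Xhat ω i) 2 μ := fun i => by
    have := (EuclideanSpace.proj i : EuclideanSpace ℝ (Fin n) →L[ℝ] ℝ).comp_memLp' (hX.sub hXhat)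
    simpa [Function.comp_def] using this
  have hs : ∀ i, MemLp (fun ω => S ω i) 2 μ := fun i => by
    have := (EuclideanSpace.proj i : EuclideanSpace ℝ (Fin n) →L[ℝ] ℝ).comp_memLp' hS
    simpa [Function.comp_def] using this
  set e : Fin n → Ω → ℝ := fun i ω => X ω i - Xhat ω i with hedef
  set t : Fin n → Ω → ℝ := fun i ω => ∑ k, A i k * S ω k with htdef
  have ht : ∀ i, MemLp (t i) 2 μ := fun i =>
    memLp_finset_sum _ (fun k _ => (hs k).const_mul (A i k))
  have ies : ∀ i j, Integrable (fun ω => e i ω * S ω j) μ := fun i j =>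
    l2_mul_integrable (he i) (hs j)
  have iss : ∀ k l, Integrable (fun ω => S ω k * S ω l) μ := fun k l =>
    l2_mul_integrable (hs k) (hs l)
  have iee : ∀ i, Integrable (fun ω => e i ω ^ 2) μ := fun i => by
    simpa [pow_two] using l2_mul_integrable (he i) (he i)
  have iet : ∀ i, Integrable (fun ω => e i ω * t i ω) μ := fun i =>
    l2_mul_integrable (he i) (ht i)
  have itt : ∀ i, Integrable (fun ω => t i ω ^ 2) μ := fun i => by
    simpa [pow_two] using l2_mul_integrable (ht i) (ht i)
  have igg : ∀ i, Integrable (fun ω => (e i ω - t i ω) ^ 2) μ := fun i => by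
    have h := l2_mul_integrable ((he i).sub (ht i)) ((he i).sub (ht i))
    simpa [pow_two, Pi.sub_apply] using h
  -- ∫ e i * t i = A i i
  have Iet : ∀ i, (∫ ω, e i ω * t i ω ∂μ) = A i i := by
    intro i
    have h0 : ∀ ω, e i ω * t i ω = ∑ k, A i k * (e i ω * S ω k) := fun ω => by
      rw [htdef, Finset.mul_sum]
      exact Finset.sum_congr rfl fun k _ => by ring
    simp_rw [h0]
    rw [integral_finset_sum _ (fun k _ => (ies i k).const_mul (A i k))]
    simp_rw [integral_const_mul]
    simp only [hedef] at hscore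
    simp only [hedef]
    simp [hscore, Matrix.one_apply, mul_ite]
  -- ∫ t i ^ 2 = A i i
  have Itt : ∀ i, (∫ ω, t i ω ^ 2 ∂μ) = A i i := by
    intro i
    have h0 : ∀ ω, t i ω ^ 2 = ∑ k, ∑ l, A i k * A i l * (S ω k * S ω l) := fun ω => by
      rw [htdef, pow_two, Finset.sum_mul_sum]
      exact Finset.sum_congr rfl fun k _ => Finset.sum_congr rfl fun l _ => by ring
    simp_rw [h0]
    rw [integral_finset_sum _ (fun k _ =>
      integrable_finset_sum _ (fun l _ => (iss k l).const_mul (A i k * A i l)))]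
    have h1 : ∀ k, (∫ ω, ∑ l, A i k * A i l * (S ω k * S ω l) ∂μ)
        = ∑ l, A i k * A i l * J k l := by
      intro k
      rw [integral_finset_sum _ (fun l _ => (iss k l).const_mul (A i k * A i l))]
      exact Finset.sum_congr rfl fun l _ => by rw [integral_const_mul, ← hJ]
    simp_rw [h1]
    have h2 : ∑ k, ∑ l, A i k * A i l * J k l = A i i := by
      have hrow : ∀ l, (∑ k, A i k * J k l) = (1 : Matrix (Fin n) (Fin n) ℝ) i l := by
        intro l
        have := congrArg (fun M => M i l) hAJ
        simpa [Matrix.mul_apply] using this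
      calc ∑ k, ∑ l, A i k * A i l * J k l
          = ∑ l, (∑ k, A i k * J k l) * A i l := by
            rw [Finset.sum_comm]
            refine Finset.sum_congr rfl fun l _ => ?_
            rw [Finset.sum_mul]
            exact Finset.sum_congr rfl fun k _ => by ring
        _ = A i i := by simp [hrow, Matrix.one_apply]
    exact h2
  -- key identity per coordinate
  have key : ∀ i, (∫ ω, (e i ω - t i ω) ^ 2 ∂μ)
      = (∫ ω, e i ω ^ 2 ∂μ) - A i i := by
    intro i
    have expand : ∀ ω, (e i ω - t i ω) ^ 2
        = e i ω ^ 2 - 2 * (e i ω * t i ω) + t i ω ^ 2 := fun ω => by ring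
    have hsubint : Integrable (fun ω => e i ω ^ 2 - 2 * (e i ω * t i ω)) μ :=
      (iee i).sub ((iet i).const_mul 2)
    simp_rw [expand]
    rw [integral_add hsubint (itt i), integral_sub (iee i) ((iet i).const_mul 2),
      integral_const_mul, Iet, Itt]
    ring
  -- nonnegativity
  have hnonneg : 0 ≤ ∑ i, ∫ ω, (e i ω - t i ω) ^ 2 ∂μ :=
    Finset.sum_nonneg fun i _ => integral_nonneg fun ω => sq_nonneg _
  have hsum : ∑ i, ∫ ω, (e i ω - t i ω) ^ 2 ∂μ
      = (∑ i, ∫ ω, e i ω ^ 2 ∂μ) - Matrix.trace A := by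
    simp only [key, Finset.sum_sub_distrib, Matrix.trace, Matrix.diag]
  -- norm identity
  have hnorm : (∫ ω, ‖X ω - Xhat ω‖ ^ 2 ∂μ) = ∑ i, ∫ ω, e i ω ^ 2 ∂μ := by
    rw [← integral_finset_sum _ (fun i _ => iee i)]
    congr 1; funext ω
    rw [EuclideanSpace.norm_eq, Real.sq_sqrt (Finset.sum_nonneg fun i _ => sq_nonneg _)]
    refine Finset.sum_congr rfl fun i _ => ?_
    simp [hedef, sq_abs]
  rw [ge_iff_le, hnorm]
  rw [hsum] at hnonneg
  linarith
end

section
/- Let f : ℝⁿ → ℝⁿ be twice differentiable at x ∈ ℝⁿ, let A be a symmetric real n×n matrix, c ∈ ℝ, and define L : ℝⁿ × ℝⁿ → ℝ by L(x, y) = c − (1/2) ⟨y − f(x), A (y − f(x))⟩. Let μ be a probability measure on ℝⁿ such that the identity map is Bochner integrable with barycenter ∫ y dμ(y) = f(x). Then for all h, k ∈ ℝⁿ, ∫ ( −D²ₓL(x, y) )(h, k) dμ(y) = ⟨Df(x) h, A (Df(x) k)⟩, where D²ₓL(x, y) denotes the second Fréchet derivative of L(·, y) at x. -/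
open MeasureTheory RealInnerProductSpace

/-- General version of the key step, for an abstract real inner product space and a
symmetric continuous linear operator `Ahat`. -/
theorem expected_neg_hessian_aux {E : Type*} [NormedAddCommGroup E]
    [InnerProductSpace ℝ E] [CompleteSpace E] [MeasurableSpace E] [BorelSpace E]
    (f : E → E) (x : E)
    (hf : ∀ᶠ z in nhds x, DifferentiableAt ℝ f z)
    (hf' : DifferentiableAt ℝ (fderiv ℝ f) x)
    (Ahat : E →L[ℝ] E) (hsym : ∀ u v : E, ⟪Ahat u, v⟫ = ⟪u, Ahat v⟫) (c : ℝ)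
    (L : E → E → ℝ)
    (hL : ∀ z y, L z y = c - (1 / 2) * ⟪y - f z, Ahat (y - f z)⟫)
    (μ : Measure E) [IsProbabilityMeasure μ]
    (hid : Integrable (fun y => y) μ)
    (hbar : (∫ y, y ∂μ) = f x) :
    ∀ h k : E,
      (∫ y, -(fderiv ℝ (fderiv ℝ (fun z => L z y)) x h k) ∂μ)
        = ⟪fderiv ℝ f x h, Ahat (fderiv ℝ f x k)⟫ := by
  intro h k
  -- First derivative of `z ↦ L z y` at points where `f` is differentiable.
  have hasD1 : ∀ (y : E) (z : E), DifferentiableAt ℝ f z →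
      HasFDerivAt (fun z => L z y) ((innerSL ℝ (Ahat (y - f z))).comp (fderiv ℝ f z)) z := by
    intro y z hz
    have hg : HasFDerivAt (fun z => y - f z) (-(fderiv ℝ f z)) z :=
      hz.hasFDerivAt.const_sub y
    have hAhg : HasFDerivAt (fun z => Ahat (y - f z)) (Ahat.comp (-(fderiv ℝ f z))) z :=
      Ahat.hasFDerivAt.comp z hg
    have hinner := hg.inner ℝ hAhg
    have hmain := (hinner.const_mul (1 / 2 : ℝ)).const_sub c
    have heq : (fun z => c - (1 / 2 : ℝ) *
        ⟪y - f z, Ahat (y - f z)⟫) = fun z => L z y := by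
      funext z
      rw [hL z y]
    rw [heq] at hmain
    refine hmain.congr_fderiv ?_
    ext v
    simp only [ContinuousLinearMap.coe_comp', Function.comp_apply, innerSL_apply_apply,
      ContinuousLinearMap.neg_apply, ContinuousLinearMap.smul_apply,
      fderivInnerCLM_apply, ContinuousLinearMap.prod_apply, map_neg,
      smul_eq_mul, inner_neg_left, inner_neg_right]
    have hs : ⟪y - f z, Ahat (fderiv ℝ f z v)⟫ = ⟪Ahat (y - f z), fderiv ℝ f z v⟫ := by
      rw [hsym]
    rw [real_inner_comm ((fderiv ℝ f z) v) (Ahat (y - f z))] at hs ⊢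
    linarith [hs]
  -- the first derivative function agrees near `x` with the explicit formula
  have hD1eq : ∀ y : E, fderiv ℝ (fun z => L z y)
      =ᶠ[nhds x] fun z => (innerSL ℝ (Ahat (y - f z))).comp (fderiv ℝ f z) := by
    intro y
    filter_upwards [hf] with z hz
    exact (hasD1 y z hz).fderiv
  -- second derivative computation
  have key : ∀ y : E, fderiv ℝ (fderiv ℝ (fun z => L z y)) x h k
      = -⟪Ahat (fderiv ℝ f x h), fderiv ℝ f x k⟫
        + ⟪Ahat (y - f x), fderiv ℝ (fderiv ℝ f) x h k⟫ := by
    intro y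
    have hx : DifferentiableAt ℝ f x := hf.self_of_nhds
    have hM : HasFDerivAt (fun z => innerSL ℝ (Ahat (y - f z)))
        (((innerSL ℝ (E := E)).comp Ahat).comp (-(fderiv ℝ f x))) x := by
      have hg : HasFDerivAt (fun z => y - f z) (-(fderiv ℝ f x)) x :=
        hx.hasFDerivAt.const_sub y
      exact ((innerSL ℝ (E := E)).comp Ahat).hasFDerivAt.comp x hg
    have hN : HasFDerivAt (fderiv ℝ f) (fderiv ℝ (fderiv ℝ f) x) x := hf'.hasFDerivAt
    have hT := hM.clm_comp hN
    have hfd : fderiv ℝ (fderiv ℝ (fun z => L z y)) x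
        = fderiv ℝ (fun z => (innerSL ℝ (Ahat (y - f z))).comp (fderiv ℝ f z)) x :=
      (hD1eq y).fderiv_eq
    rw [hfd, hT.fderiv]
    simp only [ContinuousLinearMap.add_apply, ContinuousLinearMap.coe_comp',
      Function.comp_apply, ContinuousLinearMap.compL_apply,
      ContinuousLinearMap.flip_apply, ContinuousLinearMap.neg_apply, map_neg,
      innerSL_apply_apply, inner_neg_left]
    ring
  have hsub : Integrable (fun y : E => y - f x) μ := hid.sub (integrable_const _)
  have hint2 : Integrable (fun y : E =>
      ⟪Ahat (y - f x), fderiv ℝ (fderiv ℝ f) x h k⟫) μ := by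
    have heq2 : (fun y : E => ⟪Ahat (y - f x), fderiv ℝ (fderiv ℝ f) x h k⟫)
        = fun y : E => (((innerSL ℝ (E := E)).flip (fderiv ℝ (fderiv ℝ f) x h k)).comp Ahat)
          (y - f x) := by
      funext y
      simp only [ContinuousLinearMap.coe_comp', Function.comp_apply,
        ContinuousLinearMap.flip_apply, innerSL_apply_apply]
    rw [heq2]
    exact (((innerSL ℝ (E := E)).flip (fderiv ℝ (fderiv ℝ f) x h k)).comp Ahat).integrable_comp
      hsub
  calc (∫ y, -(fderiv ℝ (fderiv ℝ (fun z => L z y)) x h k) ∂μ)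
      = ∫ y, (⟪Ahat (fderiv ℝ f x h), fderiv ℝ f x k⟫
          - ⟪Ahat (y - f x), fderiv ℝ (fderiv ℝ f) x h k⟫) ∂μ := by
        congr 1
        funext y
        rw [key y]
        ring
    _ = (∫ _y, (⟪Ahat (fderiv ℝ f x h), fderiv ℝ f x k⟫ : ℝ) ∂μ)
          - ∫ y, ⟪Ahat (y - f x), fderiv ℝ (fderiv ℝ f) x h k⟫ ∂μ :=
        integral_sub (integrable_const _) hint2
    _ = ⟪fderiv ℝ f x h, Ahat (fderiv ℝ f x k)⟫ := by
        have hzero : (∫ y, ⟪Ahat (y - f x), fderiv ℝ (fderiv ℝ f) x h k⟫ ∂μ) = 0 := by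
          set w : E := fderiv ℝ (fderiv ℝ f) x h k with hw
          set φ : E →L[ℝ] ℝ := ((innerSL ℝ (E := E)).flip w).comp Ahat with hφdef
          have heq3 : (fun y : E => ⟪Ahat (y - f x), w⟫) = fun y : E => φ (y - f x) := by
            funext y
            simp only [hφdef, ContinuousLinearMap.coe_comp', Function.comp_apply,
              ContinuousLinearMap.flip_apply, innerSL_apply_apply]
          calc (∫ y, ⟪Ahat (y - f x), w⟫ ∂μ) = ∫ y, φ (y - f x) ∂μ := by rw [heq3]
            _ = φ (∫ y, (y - f x) ∂μ) := φ.integral_comp_comm hsub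
            _ = 0 := by
                rw [integral_sub hid (integrable_const _), hbar, integral_const,
                  probReal_univ, one_smul, sub_self, map_zero]
        rw [hzero, integral_const, probReal_univ, one_smul, sub_zero,
          hsym]

/-- Key step (29c)-(29d) in the proof of Lemma 8: for the Gaussian transition
log-density `L(x,y) = c - (1/2)⟨y - f(x), A(y - f(x))⟩` with `A` symmetric and `f`
twice differentiable at `x`, if `μ` is a probability measure on `ℝⁿ` with barycenter
`∫ y dμ(y) = f(x)`, then `∫ (-D²ₓL(x,y))(h,k) dμ(y) = ⟨Df(x)h, A(Df(x)k)⟩`. -/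
theorem expected_neg_hessian_gaussian_log_density {n : ℕ}
    (f : EuclideanSpace ℝ (Fin n) → EuclideanSpace ℝ (Fin n))
    (x : EuclideanSpace ℝ (Fin n))
    (hf : ∀ᶠ z in nhds x, DifferentiableAt ℝ f z)
    (hf' : DifferentiableAt ℝ (fderiv ℝ f) x)
    (A : Matrix (Fin n) (Fin n) ℝ) (hA : A.IsSymm) (c : ℝ)
    (L : EuclideanSpace ℝ (Fin n) → EuclideanSpace ℝ (Fin n) → ℝ)
    (hL : ∀ z y, L z y = c - (1 / 2) * ⟪y - f z, Matrix.toEuclideanLin A (y - f z)⟫)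
    (μ : Measure (EuclideanSpace ℝ (Fin n))) [IsProbabilityMeasure μ]
    (hid : Integrable (fun y => y) μ)
    (hbar : (∫ y, y ∂μ) = f x) :
    ∀ h k : EuclideanSpace ℝ (Fin n),
      (∫ y, -(fderiv ℝ (fderiv ℝ (fun z => L z y)) x h k) ∂μ)
        = ⟪fderiv ℝ f x h, Matrix.toEuclideanLin A (fderiv ℝ f x k)⟫ := by
  let Ahat : EuclideanSpace ℝ (Fin n) →L[ℝ] EuclideanSpace ℝ (Fin n) :=
    Matrix.toEuclideanCLM (𝕜 := ℝ) A
  have hAh : ∀ v : EuclideanSpace ℝ (Fin n), Ahat v = Matrix.toEuclideanLin A v := by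
    intro v
    rw [← Matrix.coe_toEuclideanCLM_eq_toEuclideanLin]
    rfl
  have hherm : A.IsHermitian := by
    rwa [Matrix.IsHermitian, Matrix.conjTranspose_eq_transpose_of_trivial]
  have hsym : ∀ u v : EuclideanSpace ℝ (Fin n), ⟪Ahat u, v⟫ = ⟪u, Ahat v⟫ := by
    intro u v
    rw [hAh, hAh]
    exact Matrix.isHermitian_iff_isSymmetric.1 hherm u v
  have hL' : ∀ z y, L z y = c - (1 / 2) * ⟪y - f z, Ahat (y - f z)⟫ := by
    intro z y
    rw [hL z y, hAh]
  intro h k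
  rw [← hAh]
  exact expected_neg_hessian_aux f x hf hf' Ahat hsym c L hL' μ hid hbar h k
end
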